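/- Let G=(V,E,W) be a weighted graph with positive integer edge weights, let ε>0, and for i∈ℕ let b(i)=(1+ε)^i and define rounded weights W_i(e)=b(i)·⌈W(e)/b(i)⌉ with corresponding distance function Wd_i. For nodes v,w let Wd(v,w) be their weighted distance and h_{v,w} the minimum number of hops on a shortest weighted v-w path. Then for i = max{0, ⌊log_{1+ε}(ε·Wd(v,w)/h_{v,w})⌋}, it holds that Wd_i(v,w) < (1+ε)·Wd(v,w). -/

import Mathlib

/-- Total weight of a walk under an edge-weight function. -/
noncomputable def walkWeight {V : Type*} {G : SimpleGraph V} (W : Sym2 V → ℝ)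
    {u v : V} (p : G.Walk u v) : ℝ :=
  (p.edges.map W).sum

private lemma list_sum_lt_aux {α : Type*} {l : List α} (hl : l ≠ []) (f g : α → ℝ)
    (h : ∀ x ∈ l, f x < g x) : (l.map f).sum < (l.map g).sum := by
  induction l with
  | nil => simp at hl
  | cons a t ih =>
    simp only [List.map_cons, List.sum_cons]
    rcases t.eq_nil_or_concat with rfl | _
    · simpa using h a (by simp)
    · have ht : t ≠ [] := by rintro rfl; simp_all
      have := ih ht (fun x hx => h x (by simp [hx]))
      have ha := h a (by simp)
      linarith

private lemma list_sum_add_aux {α : Type*} (l : List α) (f : α → ℝ) (c : ℝ) :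
    (l.map (fun x => f x + c)).sum = (l.map f).sum + l.length * c := by
  induction l with
  | nil => simp
  | cons a t ih => simp [ih]; ring

private lemma list_len_le_sum_aux {l : List ℝ} (h : ∀ x ∈ l, (1:ℝ) ≤ x) :
    (l.length : ℝ) ≤ l.sum := by
  induction l with
  | nil => simp
  | cons a t ih =>
    have := ih (fun x hx => h x (by simp [hx]))
    have ha := h a (by simp)
    simp only [List.length_cons, List.sum_cons]
    push_cast
    linarith

/-- `G = (V,E,W)` a weighted graph with positive integer edge
weights, `ε > 0`, `b(i) = (1+ε)^i`, and rounded weights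
`W_i(e) = b(i)·⌈W(e)/b(i)⌉` with distance `Wd_i`. Here `p` is a minimum-hop
shortest weighted `v`-`w` path, so `Wd(v,w) = W(p)` and `h_{v,w} = ℓ(p)`.
For `i = max{0, ⌊log_{1+ε}(ε·Wd(v,w)/h_{v,w})⌋}`,
`Wd_i(v,w) < (1+ε)·Wd(v,w)`. -/
theorem rounding_distance_bound {V : Type*} (G : SimpleGraph V)
    (W : Sym2 V → ℕ) (hW : ∀ e, 0 < W e)
    (ε : ℝ) (hε : 0 < ε) (v w : V) (hvw : v ≠ w)
    (p : G.Walk v w)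
    (hmin : ∀ q : G.Walk v w,
      walkWeight (fun e => (W e : ℝ)) p ≤ walkWeight (fun e => (W e : ℝ)) q)
    (hhop : ∀ q : G.Walk v w,
      walkWeight (fun e => (W e : ℝ)) q = walkWeight (fun e => (W e : ℝ)) p →
        p.length ≤ q.length) :
    let Wd : ℝ := walkWeight (fun e => (W e : ℝ)) p
    let h : ℕ := p.length
    let i : ℕ := (⌊Real.logb (1 + ε) (ε * Wd / h)⌋).toNat
    let b : ℝ := (1 + ε) ^ i
    let Wi : Sym2 V → ℝ := fun e => b * (⌈(W e : ℝ) / b⌉ : ℤ)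
    sInf {x : ℝ | ∃ q : G.Walk v w, x = walkWeight Wi q} < (1 + ε) * Wd := by
  intro Wd h i b Wi
  have hb1 : (0:ℝ) < 1 + ε := by linarith
  have hbpos : (0:ℝ) < b := pow_pos hb1 i
  have hh : 0 < h := by
    by_contra hc
    have : p.length = 0 := Nat.eq_zero_of_not_pos hc
    exact hvw (SimpleGraph.Walk.eq_of_length_eq_zero this)
  have hedges : p.edges ≠ [] := by
    intro hc
    have : p.edges.length = 0 := by rw [hc]; rfl
    rw [SimpleGraph.Walk.length_edges] at this
    omega
  -- Wd ≥ h ≥ 1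
  have hWd_ge : (h : ℝ) ≤ Wd := by
    have : ((p.edges.map (fun e => (W e : ℝ))).length : ℝ)
        ≤ (p.edges.map (fun e => (W e : ℝ))).sum := by
      apply list_len_le_sum_aux
      intro x hx
      simp only [List.mem_map] at hx
      obtain ⟨e, _, rfl⟩ := hx
      exact_mod_cast hW e
    simpa [walkWeight, SimpleGraph.Walk.length_edges, Wd, h] using this
  have hWdpos : 0 < Wd := lt_of_lt_of_le (by exact_mod_cast hh) hWd_ge
  -- key bound on the walk p itself
  have hkey : walkWeight Wi p < (1 + ε) * Wd := by
    rcases le_or_gt 0 (⌊Real.logb (1 + ε) (ε * Wd / h)⌋) with hfloor | hfloor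
    · -- b ≤ ε * Wd / h
      have hxpos : 0 < ε * Wd / h := by positivity
      have hblog : (i : ℝ) ≤ Real.logb (1 + ε) (ε * Wd / h) := by
        have h0 : ((⌊Real.logb (1 + ε) (ε * Wd / h)⌋ : ℤ) : ℝ)
            ≤ Real.logb (1 + ε) (ε * Wd / h) := Int.floor_le _
        have h1 : ((i : ℤ) : ℝ) = ((⌊Real.logb (1 + ε) (ε * Wd / h)⌋ : ℤ) : ℝ) := by
          exact_mod_cast congrArg (fun z : ℤ => (z : ℝ)) (Int.toNat_of_nonneg hfloor)
        calc (i : ℝ) = ((i : ℤ) : ℝ) := by push_cast; ring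
          _ ≤ Real.logb (1 + ε) (ε * Wd / h) := by rw [h1]; exact h0
      have hble : b ≤ ε * Wd / h := by
        have h1 : b = (1 + ε) ^ (i : ℝ) := by
          rw [Real.rpow_natCast]
        have h2 : (1 + ε) ^ (i : ℝ) ≤ (1 + ε) ^ Real.logb (1 + ε) (ε * Wd / h) :=
          Real.rpow_le_rpow_of_exponent_le (by linarith) hblog
        rw [Real.rpow_logb hb1 (by linarith) hxpos] at h2
        linarith [h1 ▸ h2]
      have hsum : walkWeight Wi p <
          (p.edges.map (fun e => (W e : ℝ) + b)).sum := by
        apply list_sum_lt_aux hedges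
        intro e _
        have hceil : (⌈(W e : ℝ) / b⌉ : ℝ) < (W e : ℝ) / b + 1 := Int.ceil_lt_add_one _
        calc b * (⌈(W e : ℝ) / b⌉ : ℤ) < b * ((W e : ℝ) / b + 1) := by
              exact_mod_cast (mul_lt_mul_of_pos_left hceil hbpos)
          _ = (W e : ℝ) + b := by field_simp
      rw [list_sum_add_aux] at hsum
      have hlen : (p.edges.length : ℝ) = (h : ℝ) := by
        rw [SimpleGraph.Walk.length_edges]
      have hhb : (h : ℝ) * b ≤ ε * Wd := by
        have hhpos : (0:ℝ) < h := by exact_mod_cast hh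
        rw [div_eq_mul_inv] at hble
        calc (h : ℝ) * b ≤ (h : ℝ) * (ε * Wd * (h : ℝ)⁻¹) := by
              apply mul_le_mul_of_nonneg_left hble (le_of_lt hhpos)
          _ = ε * Wd := by field_simp
      have : walkWeight Wi p < Wd + ε * Wd := by
        have : (p.edges.map (fun e => (W e : ℝ))).sum = Wd := rfl
        rw [this] at hsum
        nlinarith
      linarith
    · -- i = 0, b = 1, Wi = W
      have hi0 : i = 0 := by
        simp only [i, Int.toNat_eq_zero]
        omega
      have hb1' : b = 1 := by simp [b, hi0]
      have hWi : walkWeight Wi p = Wd := by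
        simp only [walkWeight, Wi, hb1', div_one, one_mul]
        congr 1
        apply List.map_congr_left
        intro e _
        simp
      rw [hWi]
      nlinarith
  -- sInf bound
  have hmem : walkWeight Wi p ∈ {x : ℝ | ∃ q : G.Walk v w, x = walkWeight Wi q} :=
    ⟨p, rfl⟩
  have hbdd : BddBelow {x : ℝ | ∃ q : G.Walk v w, x = walkWeight Wi q} := by
    refine ⟨0, ?_⟩
    rintro x ⟨q, rfl⟩
    apply List.sum_nonneg
    intro y hy
    simp only [List.mem_map] at hy
    obtain ⟨e, _, rfl⟩ := hy
    have : (0:ℝ) ≤ (⌈(W e : ℝ) / b⌉ : ℤ) := by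
      have : (0:ℝ) ≤ (W e : ℝ) / b := by positivity
      exact_mod_cast Int.ceil_nonneg this
    positivity
  exact lt_of_le_of_lt (csInf_le hbdd hmem) hkey
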